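/- Let $0 \to A \to B \to C \to 0$ and $0 \to A \to B' \to C' \to 0$ be short exact sequences of modules over a ring $R$ with a morphism of short exact sequences from the first to the second that is the identity on $A$. If an additive derived-functor long exact sequence gives isomorphisms $H^i(B') \cong H^i(C')$ for all $i > 0$, and the map $C \to C'$ admits a retraction, then $H^i(B) \cong H^i(C)$ being an isomorphism for all $i>0$ implies the map $H^i(B) \to H^i(B')$ admits a retraction for all $i > 0$. -/

import Mathlib

open CategoryTheory

/-- Two short exact sequences `0 → A → B → C → 0` and `0 → A → B' → C' → 0` of
`R`-modules with a morphism of short exact sequences (identity on `A`); `H^i` are the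
right derived functors of a left exact additive functor `F`.  If `H^i(B') → H^i(C')` is
an isomorphism for all `i > 0`, the map `C → C'` admits a retraction, and
`H^i(B) → H^i(C)` is an isomorphism for all `i > 0`, then `H^i(B) → H^i(B')` admits a
retraction for all `i > 0`. -/
theorem stmt_5 (R : Type) [CommRing R]
    (A B C B' C' : ModuleCat.{0} R)
    (f : A ⟶ B) (g : B ⟶ C) (f' : A ⟶ B') (g' : B' ⟶ C')
    (hf : Function.Injective f) (hg : Function.Surjective g)
    (hfg : Function.Exact f g)
    (hf' : Function.Injective f') (hg' : Function.Surjective g')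
    (hfg' : Function.Exact f' g')
    -- morphism of short exact sequences, restricting to the identity on `A`
    (β : B ⟶ B') (γ : C ⟶ C')
    (hcomm₁ : f ≫ β = f') (hcomm₂ : β ≫ g' = g ≫ γ)
    -- the derived functor data
    (F : ModuleCat.{0} R ⥤ AddCommGrpCat.{0}) [F.Additive] [Limits.PreservesFiniteLimits F]
    -- the long exact sequence gives isomorphisms `H^i(B') ≅ H^i(C')` for `i > 0`
    (hiso' : ∀ i > 0, IsIso ((F.rightDerived i).map g'))
    -- `C → C'` admits a retraction
    (hretr : ∃ r : C' ⟶ C, γ ≫ r = 𝟙 C)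
    -- `H^i(B) → H^i(C)` is an isomorphism for all `i > 0`
    (hiso : ∀ i > 0, IsIso ((F.rightDerived i).map g)) :
    ∀ i > 0, ∃ ρ : (F.rightDerived i).obj B' ⟶ (F.rightDerived i).obj B,
      (F.rightDerived i).map β ≫ ρ = 𝟙 ((F.rightDerived i).obj B) := by
  intro i hi
  obtain ⟨r, hr⟩ := hretr
  have := hiso i hi
  refine ⟨(F.rightDerived i).map g' ≫ (F.rightDerived i).map r ≫
      inv ((F.rightDerived i).map g), ?_⟩
  have h1 : (F.rightDerived i).map β ≫ (F.rightDerived i).map g'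
      = (F.rightDerived i).map g ≫ (F.rightDerived i).map γ := by
    rw [← Functor.map_comp, ← Functor.map_comp, hcomm₂]
  rw [← Category.assoc, h1, Category.assoc, ← Category.assoc ((F.rightDerived i).map γ),
    ← Functor.map_comp, hr, CategoryTheory.Functor.map_id, Category.id_comp, IsIso.hom_inv_id]
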